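/- Suppose w is nonnegative and locally integrable on ℝ, and for 0 < x < y < 1 define C_w⁺(x) = sup{w({M⁺1_E > x})/w(E) : 0 < w(E) < ∞}. If 0 < λ < α < 1 then C_w⁺(λ) ≤ C_w⁺(λ/α) · C_w⁺(α), and consequently 0 ≤ C_w⁺(λ) - C_w⁺(λ/α) ≤ C_w⁺(λ/α)(C_w⁺(α) - 1). -/

import Mathlib

open MeasureTheory Set

noncomputable def Mplus (f : ℝ → ℝ) (x : ℝ) : ℝ :=
  ⨆ h : {h : ℝ // 0 < h}, (h.1)⁻¹ * ∫ t in x..(x + h.1), |f t|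

noncomputable def Mminus (f : ℝ → ℝ) (x : ℝ) : ℝ :=
  ⨆ h : {h : ℝ // 0 < h}, (h.1)⁻¹ * ∫ t in (x - h.1)..x, |f t|

noncomputable def halo (γ : ℝ) (E : Set ℝ) : Set ℝ :=
  {x | γ < Mplus (E.indicator fun _ => (1:ℝ)) x}

noncomputable def wsize (w : ℝ → ℝ) (E : Set ℝ) : ENNReal :=
  ∫⁻ x in E, ENNReal.ofReal (w x)

noncomputable def tauber (w : ℝ → ℝ) (α : ℝ) : ENNReal :=
  ⨆ E : {E : Set ℝ // MeasurableSet E ∧ 0 < wsize w E ∧ wsize w E < ⊤},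
    wsize w (halo α E.1) / wsize w E.1


lemma ind_abs (E : Set ℝ) (t : ℝ) : |E.indicator (fun _ => (1:ℝ)) t| = E.indicator (fun _ => (1:ℝ)) t :=
  abs_of_nonneg (Set.indicator_nonneg (fun _ _ => zero_le_one) t)

lemma integral_ind (E : Set ℝ) (hE : MeasurableSet E) (x h : ℝ) (hh : 0 < h) :
    ∫ t in x..(x+h), |E.indicator (fun _ => (1:ℝ)) t| = (volume (E ∩ Set.Ioc x (x+h))).toReal := by
  rw [intervalIntegral.integral_of_le (by linarith)]
  simp only [ind_abs]
  rw [MeasureTheory.integral_indicator hE]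
  rw [MeasureTheory.Measure.restrict_restrict hE]
  simp [Real.volume_Ioc]
  rfl

lemma term_le_one (E : Set ℝ) (hE : MeasurableSet E) (x : ℝ) (h : ℝ) (hh : 0 < h) :
    h⁻¹ * ∫ t in x..(x+h), |E.indicator (fun _ => (1:ℝ)) t| ≤ 1 := by
  rw [integral_ind E hE x h hh]
  have h1 : volume (E ∩ Set.Ioc x (x+h)) ≤ ENNReal.ofReal h := by
    calc volume (E ∩ Set.Ioc x (x+h)) ≤ volume (Set.Ioc x (x+h)) :=
      measure_mono Set.inter_subset_right
    _ = ENNReal.ofReal h := by simp [Real.volume_Ioc]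
  have h2 : (volume (E ∩ Set.Ioc x (x+h))).toReal ≤ h := by
    have := ENNReal.toReal_mono (by simp) h1
    simpa [ENNReal.toReal_ofReal hh.le] using this
  calc h⁻¹ * (volume (E ∩ Set.Ioc x (x+h))).toReal ≤ h⁻¹ * h := by
        exact mul_le_mul_of_nonneg_left h2 (inv_nonneg.2 hh.le)
    _ = 1 := inv_mul_cancel₀ hh.ne'

lemma bdd_range (E : Set ℝ) (hE : MeasurableSet E) (x : ℝ) :
    BddAbove (Set.range fun h : {h : ℝ // 0 < h} =>
      (h.1)⁻¹ * ∫ t in x..(x + h.1), |E.indicator (fun _ => (1:ℝ)) t|) := by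
  refine ⟨1, ?_⟩
  rintro y ⟨h, rfl⟩
  exact term_le_one E hE x h.1 h.2

lemma mem_halo_of (E : Set ℝ) (hE : MeasurableSet E) (γ x h : ℝ) (hh : 0 < h)
    (hlt : γ < h⁻¹ * (volume (E ∩ Set.Ioc x (x+h))).toReal) : x ∈ halo γ E := by
  have : γ < (⟨h, hh⟩ : {h : ℝ // 0 < h}).1⁻¹ * ∫ t in x..(x + h), |E.indicator (fun _ => (1:ℝ)) t| := by
    rw [integral_ind E hE x h hh]; exact hlt
  exact lt_of_lt_of_le this (le_ciSup (bdd_range E hE x) ⟨h, hh⟩)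

lemma exists_of_mem_halo (E : Set ℝ) (hE : MeasurableSet E) (γ x : ℝ)
    (hx : x ∈ halo γ E) : ∃ h : ℝ, 0 < h ∧ γ * h < (volume (E ∩ Set.Ioc x (x+h))).toReal := by
  have hx' : γ < ⨆ h : {h : ℝ // 0 < h}, (h.1)⁻¹ * ∫ t in x..(x + h.1), |E.indicator (fun _ => (1:ℝ)) t| := hx
  rw [lt_ciSup_iff (bdd_range E hE x)] at hx'
  obtain ⟨⟨h, hh⟩, hlt⟩ := hx'
  refine ⟨h, hh, ?_⟩
  rw [integral_ind E hE x h hh] at hlt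
  have h2 : γ < (volume (E ∩ Set.Ioc x (x+h))).toReal / h := by
    rwa [div_eq_inv_mul]
  exact (lt_div_iff₀ hh).1 h2

lemma ind_intervalIntegrable (E : Set ℝ) (hE : MeasurableSet E) (a b : ℝ) :
    IntervalIntegrable (fun t => |E.indicator (fun _ => (1:ℝ)) t|) volume a b := by
  have : (fun t => |E.indicator (fun _ => (1:ℝ)) t|) = E.indicator (fun _ => (1:ℝ)) := by
    funext t; exact ind_abs E t
  rw [this]
  constructor <;>
  · rw [MeasureTheory.IntegrableOn, MeasureTheory.integrable_indicator_iff hE]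
    exact MeasureTheory.integrableOn_const (ne_of_lt (by
      rw [MeasureTheory.Measure.restrict_apply hE]
      exact lt_of_le_of_lt (measure_mono Set.inter_subset_right) measure_Ioc_lt_top)) (by simp)

lemma cont_term (E : Set ℝ) (hE : MeasurableSet E) (h : ℝ) :
    Continuous fun x => ∫ t in x..(x+h), |E.indicator (fun _ => (1:ℝ)) t| := by
  have hint := ind_intervalIntegrable E hE
  have hcont := intervalIntegral.continuous_primitive hint 0
  have heq : (fun x => ∫ t in x..(x+h), |E.indicator (fun _ => (1:ℝ)) t|) =
      fun x => (∫ t in (0:ℝ)..(x+h), |E.indicator (fun _ => (1:ℝ)) t|) -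
        ∫ t in (0:ℝ)..x, |E.indicator (fun _ => (1:ℝ)) t| := by
    funext x
    rw [intervalIntegral.integral_interval_sub_left (hint 0 (x+h)) (hint 0 x)]
  rw [heq]
  exact (hcont.comp (continuous_id.add continuous_const)).sub hcont

lemma halo_isOpen (E : Set ℝ) (hE : MeasurableSet E) (γ : ℝ) : IsOpen (halo γ E) := by
  have heq : halo γ E = ⋃ h : {h : ℝ // 0 < h},
      {x | γ < (h.1)⁻¹ * ∫ t in x..(x + h.1), |E.indicator (fun _ => (1:ℝ)) t|} := by
    ext x
    simp only [halo, Mplus, Set.mem_setOf_eq, Set.mem_iUnion]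
    exact lt_ciSup_iff (bdd_range E hE x)
  rw [heq]
  exact isOpen_iUnion fun h =>
    isOpen_lt continuous_const (continuous_const.mul (cont_term E hE h.1))

lemma halo_mono (A B : Set ℝ) (hA : MeasurableSet A) (hB : MeasurableSet B) (hAB : A ⊆ B)
    (γ : ℝ) : halo γ A ⊆ halo γ B := by
  intro x hx
  obtain ⟨h, hh, hlt⟩ := exists_of_mem_halo A hA γ x hx
  apply mem_halo_of B hB γ x h hh
  have hle : (volume (A ∩ Set.Ioc x (x+h))).toReal ≤ (volume (B ∩ Set.Ioc x (x+h))).toReal := by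
    apply ENNReal.toReal_mono
    · exact ne_of_lt (lt_of_le_of_lt (measure_mono Set.inter_subset_right) measure_Ioc_lt_top)
    · exact measure_mono (Set.inter_subset_inter_left _ hAB)
  rw [← div_eq_inv_mul]
  exact (lt_div_iff₀ hh).2 (lt_of_lt_of_le hlt hle)

lemma mem_halo_of' (E : Set ℝ) (hE : MeasurableSet E) (γ x h : ℝ) (hh : 0 < h)
    (hlt : γ * h < (volume (E ∩ Set.Ioc x (x+h))).toReal) : x ∈ halo γ E := by
  apply mem_halo_of E hE γ x h hh
  rw [← div_eq_inv_mul]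
  exact (lt_div_iff₀ hh).2 hlt

section
variable (B : Set ℝ) (hB : MeasurableSet B) (α : ℝ)

-- sub-lemma: right-hand bound
lemma right_bound (key : ∀ t ∈ B, ∀ u, t < u → volume (B ∩ Set.Ioc t u) ≤ ENNReal.ofReal (α * (u - t)))
    (hα : 0 ≤ α) (x r : ℝ) (hx : x ∈ B) (hr : 0 < r) :
    volume (B ∩ Set.Ioc x (x+r)) ≤ ENNReal.ofReal (α * r) := by
  apply ENNReal.le_of_forall_pos_le_add
  intro ε hε _
  set S := B ∩ Set.Icc x (x+r) with hS
  have hne : S.Nonempty := ⟨x, hx, by constructor <;> linarith⟩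
  have hbdd : BddAbove S := ⟨x + r, fun z hz => hz.2.2⟩
  set s2 := sSup S with hs2
  have hs2mem : x ≤ s2 ∧ s2 ≤ x + r := ⟨le_csSup hbdd ⟨hx, le_refl x, by linarith⟩,
    csSup_le hne fun z hz => hz.2.2⟩
  obtain ⟨t2, ht2S, ht2⟩ : ∃ t ∈ S, s2 - (ε:ℝ) < t := by
    have hεpos : (0:ℝ) < (ε:ℝ) := hε
    obtain ⟨t, ht, h⟩ := Real.add_neg_lt_sSup hne (by linarith : -(ε:ℝ) < 0)
    exact ⟨t, ht, by linarith⟩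
  have hsub : B ∩ Set.Ioc x (x+r) ⊆ (B ∩ Set.Ioc x t2) ∪ Set.Ioc t2 s2 := by
    rintro z ⟨hzB, hz1, hz2⟩
    have hzS : z ∈ S := ⟨hzB, le_of_lt hz1, hz2⟩
    have hzle : z ≤ s2 := le_csSup hbdd hzS
    rcases le_or_gt z t2 with hc | hc
    · exact Or.inl ⟨hzB, hz1, hc⟩
    · exact Or.inr ⟨hc, hzle⟩
  have h1 : volume (B ∩ Set.Ioc x t2) ≤ ENNReal.ofReal (α * r) := by
    rcases le_or_gt t2 x with hc | hc
    · rw [Set.Ioc_eq_empty (by exact fun hlt => absurd hc (not_le.2 hlt))]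
      simp
    · calc volume (B ∩ Set.Ioc x t2) ≤ ENNReal.ofReal (α * (t2 - x)) := key x hx t2 hc
        _ ≤ ENNReal.ofReal (α * r) := by
            apply ENNReal.ofReal_le_ofReal
            have := ht2S.2.2
            nlinarith
  have h2 : volume (Set.Ioc t2 s2) ≤ ENNReal.ofReal (ε:ℝ) := by
    rw [Real.volume_Ioc]
    apply ENNReal.ofReal_le_ofReal
    linarith
  calc volume (B ∩ Set.Ioc x (x+r)) ≤ volume ((B ∩ Set.Ioc x t2) ∪ Set.Ioc t2 s2) :=
        measure_mono hsub
    _ ≤ volume (B ∩ Set.Ioc x t2) + volume (Set.Ioc t2 s2) := measure_union_le _ _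
    _ ≤ ENNReal.ofReal (α * r) + ENNReal.ofReal (ε:ℝ) := add_le_add h1 h2
    _ = ENNReal.ofReal (α * r) + (ε : ENNReal) := by rw [ENNReal.ofReal_coe_nnreal]

-- left-hand bound
lemma left_bound (key : ∀ t ∈ B, ∀ u, t < u → volume (B ∩ Set.Ioc t u) ≤ ENNReal.ofReal (α * (u - t)))
    (hα : 0 ≤ α) (x r : ℝ) (hx : x ∈ B) (hr : 0 < r) :
    volume (B ∩ Set.Ico (x-r) x) ≤ ENNReal.ofReal (α * r) := by
  apply ENNReal.le_of_forall_pos_le_add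
  intro ε hε _
  have hεpos : (0:ℝ) < (ε:ℝ) := hε
  set S := B ∩ Set.Icc (x-r) x with hS
  have hne : S.Nonempty := ⟨x, hx, by constructor <;> linarith⟩
  have hbdd : BddBelow S := ⟨x - r, fun z hz => hz.2.1⟩
  set s1 := sInf S with hs1
  have hs1mem : x - r ≤ s1 ∧ s1 ≤ x := ⟨le_csInf hne fun z hz => hz.2.1,
    csInf_le hbdd ⟨hx, by linarith, le_refl x⟩⟩
  obtain ⟨t1, ht1S, ht1⟩ : ∃ t ∈ S, t < s1 + (ε:ℝ) := by
    obtain ⟨t, ht, h⟩ := Real.lt_sInf_add_pos hne hεpos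
    exact ⟨t, ht, h⟩
  have hsub : B ∩ Set.Ico (x-r) x ⊆ Set.Icc s1 t1 ∪ (B ∩ Set.Ioc t1 x) := by
    rintro z ⟨hzB, hz1, hz2⟩
    have hzS : z ∈ S := ⟨hzB, hz1, le_of_lt hz2⟩
    have hzge : s1 ≤ z := csInf_le hbdd hzS
    rcases le_or_gt z t1 with hc | hc
    · exact Or.inl ⟨hzge, hc⟩
    · exact Or.inr ⟨hzB, hc, le_of_lt hz2⟩
  have h1 : volume (B ∩ Set.Ioc t1 x) ≤ ENNReal.ofReal (α * r) := by
    rcases le_or_gt x t1 with hc | hc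
    · rw [Set.Ioc_eq_empty (by exact fun hlt => absurd hc (not_le.2 hlt))]
      simp
    · calc volume (B ∩ Set.Ioc t1 x) ≤ ENNReal.ofReal (α * (x - t1)) := key t1 ht1S.1 x hc
        _ ≤ ENNReal.ofReal (α * r) := by
            apply ENNReal.ofReal_le_ofReal
            have := ht1S.2.1
            nlinarith
  have h2 : volume (Set.Icc s1 t1) ≤ ENNReal.ofReal (ε:ℝ) := by
    rw [Real.volume_Icc]
    apply ENNReal.ofReal_le_ofReal
    linarith
  calc volume (B ∩ Set.Ico (x-r) x) ≤ volume (Set.Icc s1 t1 ∪ (B ∩ Set.Ioc t1 x)) :=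
        measure_mono hsub
    _ ≤ volume (Set.Icc s1 t1) + volume (B ∩ Set.Ioc t1 x) := measure_union_le _ _
    _ ≤ ENNReal.ofReal (ε:ℝ) + ENNReal.ofReal (α * r) := add_le_add h2 h1
    _ = ENNReal.ofReal (α * r) + (ε : ENNReal) := by rw [ENNReal.ofReal_coe_nnreal, add_comm]
end


lemma onesided_density (E : Set ℝ) (hE : MeasurableSet E) (α : ℝ) (h0 : 0 < α) (h1 : α < 1) :
    volume (E \ halo α E) = 0 := by
  set B := E \ halo α E with hBdef
  have hBmeas : MeasurableSet B := hE.diff (halo_isOpen E hE α).measurableSet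
  have key : ∀ t ∈ B, ∀ u, t < u → volume (B ∩ Set.Ioc t u) ≤ ENNReal.ofReal (α * (u - t)) := by
    intro t ht u htu
    by_contra hcon
    push_neg at hcon
    apply ht.2
    apply mem_halo_of' E hE α t (u - t) (by linarith)
    have hle : volume (B ∩ Set.Ioc t u) ≤ volume (E ∩ Set.Ioc t (t + (u-t))) := by
      apply measure_mono
      rintro z ⟨hz1, hz2⟩
      exact ⟨hz1.1, by simpa using hz2⟩
    have hfin : volume (E ∩ Set.Ioc t (t + (u-t))) ≠ ⊤ :=
      ne_of_lt (lt_of_le_of_lt (measure_mono Set.inter_subset_right) measure_Ioc_lt_top)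
    have := lt_of_lt_of_le hcon hle
    exact (ENNReal.ofReal_lt_iff_lt_toReal (by nlinarith) hfin).1 this
  by_contra hpos0
  have hpos : 0 < volume B := pos_iff_ne_zero.2 hpos0
  -- find a density point in B
  have hae := Besicovitch.ae_tendsto_measure_inter_div volume B
  obtain ⟨x, hxB, hxP⟩ : ∃ x, x ∈ B ∧ Filter.Tendsto
      (fun r => volume (B ∩ Metric.closedBall x r) / volume (Metric.closedBall x r))
      (nhdsWithin 0 (Set.Ioi 0)) (nhds 1) := by
    by_contra hnone
    push_neg at hnone
    have hsub : Set.univ ⊆ {x | ¬ Filter.Tendsto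
        (fun r => volume (B ∩ Metric.closedBall x r) / volume (Metric.closedBall x r))
        (nhdsWithin 0 (Set.Ioi 0)) (nhds 1)} ∪ Bᶜ := by
      intro z _
      by_cases hz : z ∈ B
      · exact Or.inl (hnone z hz)
      · exact Or.inr hz
    have h1 : (volume.restrict B) {x | ¬ Filter.Tendsto
        (fun r => volume (B ∩ Metric.closedBall x r) / volume (Metric.closedBall x r))
        (nhdsWithin 0 (Set.Ioi 0)) (nhds 1)} = 0 := hae
    have h2 : (volume.restrict B) Bᶜ = 0 := by
      rw [Measure.restrict_apply (hBmeas.compl)]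
      simp
    have h3 : (volume.restrict B) Set.univ = 0 := by
      have := measure_union_le (μ := volume.restrict B) {x | ¬ Filter.Tendsto
        (fun r => volume (B ∩ Metric.closedBall x r) / volume (Metric.closedBall x r))
        (nhdsWithin 0 (Set.Ioi 0)) (nhds 1)} Bᶜ
      have hle := measure_mono (μ := volume.restrict B) hsub
      rw [h1, h2] at this
      simpa using le_trans hle this
    rw [Measure.restrict_apply_univ] at h3
    exact hpos0 h3
  -- choose a good radius
  have hclt : ENNReal.ofReal ((1+α)/2) < 1 := by
    rw [show (1:ENNReal) = ENNReal.ofReal 1 by simp]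
    exact ENNReal.ofReal_lt_ofReal_iff_of_nonneg (by linarith) |>.2 (by linarith)
  have hev : ∀ᶠ r in nhdsWithin 0 (Set.Ioi 0), ENNReal.ofReal ((1+α)/2) <
      volume (B ∩ Metric.closedBall x r) / volume (Metric.closedBall x r) :=
    hxP.eventually (eventually_gt_nhds hclt)
  obtain ⟨r, hrlt, hr⟩ := (hev.and self_mem_nhdsWithin).exists
  have hrpos : (0:ℝ) < r := hr
  -- lower bound on the ball mass
  have hlow : ENNReal.ofReal ((1+α)/2) * volume (Metric.closedBall x r) <
      volume (B ∩ Metric.closedBall x r) := by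
    have := ENNReal.mul_lt_of_lt_div hrlt
    exact this
  have hball : volume (Metric.closedBall x r) = ENNReal.ofReal (2*r) := by
    rw [Real.volume_closedBall]
  -- upper bound
  have hsub2 : B ∩ Metric.closedBall x r ⊆
      (B ∩ Set.Ico (x-r) x) ∪ ({x} ∪ (B ∩ Set.Ioc x (x+r))) := by
    rintro z ⟨hzB, hz⟩
    rw [Real.closedBall_eq_Icc] at hz
    rcases lt_trichotomy z x with hc | hc | hc
    · exact Or.inl ⟨hzB, hz.1, hc⟩
    · exact Or.inr (Or.inl hc)
    · exact Or.inr (Or.inr ⟨hzB, hc, hz.2⟩)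
  have hup : volume (B ∩ Metric.closedBall x r) ≤ ENNReal.ofReal (α * r) + ENNReal.ofReal (α * r) := by
    calc volume (B ∩ Metric.closedBall x r)
        ≤ volume ((B ∩ Set.Ico (x-r) x)) + volume ({x} ∪ (B ∩ Set.Ioc x (x+r))) :=
          le_trans (measure_mono hsub2) (measure_union_le _ _)
      _ ≤ volume ((B ∩ Set.Ico (x-r) x)) + (volume ({x} : Set ℝ) + volume (B ∩ Set.Ioc x (x+r))) := by
          gcongr
          exact measure_union_le _ _
      _ ≤ ENNReal.ofReal (α * r) + (0 + ENNReal.ofReal (α * r)) := by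
          gcongr
          · exact left_bound B α key h0.le x r hxB hrpos
          · simp [Real.volume_singleton]
          · exact right_bound B α key h0.le x r hxB hrpos
      _ = ENNReal.ofReal (α * r) + ENNReal.ofReal (α * r) := by rw [zero_add]
  -- contradiction
  have hcomb : ENNReal.ofReal ((1+α)*r) < ENNReal.ofReal (2*(α*r)) := by
    calc ENNReal.ofReal ((1+α)*r) = ENNReal.ofReal ((1+α)/2) * ENNReal.ofReal (2*r) := by
          rw [← ENNReal.ofReal_mul (by linarith)]
          ring_nf
      _ = ENNReal.ofReal ((1+α)/2) * volume (Metric.closedBall x r) := by rw [hball]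
      _ < volume (B ∩ Metric.closedBall x r) := hlow
      _ ≤ ENNReal.ofReal (α * r) + ENNReal.ofReal (α * r) := hup
      _ = ENNReal.ofReal (2*(α*r)) := by
          rw [← ENNReal.ofReal_add (by nlinarith) (by nlinarith)]
          ring_nf
  rw [ENNReal.ofReal_lt_ofReal_iff (by nlinarith)] at hcomb
  nlinarith

lemma open_preconn_eq_Ioo (S : Set ℝ) (hS : IsOpen S) (hc : IsPreconnected S)
    (hne : S.Nonempty) (lo hi : ℝ) (hsub : S ⊆ Set.Ioo lo hi) :
    ∃ a b : ℝ, a < b ∧ S = Set.Ioo a b := by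
  have hbddA : BddAbove S := ⟨hi, fun z hz => (hsub hz).2.le⟩
  have hbddB : BddBelow S := ⟨lo, fun z hz => (hsub hz).1.le⟩
  have hord : OrdConnected S := hc.ordConnected
  refine ⟨sInf S, sSup S, ?_, ?_⟩
  · obtain ⟨z, hz⟩ := hne
    obtain ⟨ε, hε, hball⟩ := Metric.isOpen_iff.1 hS z hz
    have h1 : z - ε/2 ∈ S := hball (by
      simp only [Metric.mem_ball, Real.dist_eq]
      rw [abs_of_nonpos (by linarith)]; linarith)
    have h2 : z + ε/2 ∈ S := hball (by
      simp only [Metric.mem_ball, Real.dist_eq]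
      rw [abs_of_nonneg (by linarith)]; linarith)
    have := csInf_le hbddB h1
    have := le_csSup hbddA h2
    linarith
  · apply Set.Subset.antisymm
    · intro z hz
      obtain ⟨ε, hε, hball⟩ := Metric.isOpen_iff.1 hS z hz
      have h1 : z - ε/2 ∈ S := hball (by
      simp only [Metric.mem_ball, Real.dist_eq]
      rw [abs_of_nonpos (by linarith)]; linarith)
      have h2 : z + ε/2 ∈ S := hball (by
      simp only [Metric.mem_ball, Real.dist_eq]
      rw [abs_of_nonneg (by linarith)]; linarith)
      have := csInf_le hbddB h1
      have := le_csSup hbddA h2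
      exact ⟨by linarith, by linarith⟩
    · rintro y ⟨hy1, hy2⟩
      obtain ⟨z1, hz1S, hz1⟩ := exists_lt_of_csInf_lt hne hy1
      obtain ⟨z2, hz2S, hz2⟩ := exists_lt_of_lt_csSup hne hy2
      exact hord.out hz1S hz2S ⟨hz1.le, hz2.le⟩

lemma comp_bound (Om : Set ℝ) (hOm : IsOpen Om) (x b : ℝ) (hx : x ∉ Om)
    (D : Set ℝ) (hD : MeasurableSet D) (α : ℝ) (hα : 0 ≤ α)
    (hyp : ∀ a, a ∉ Om → ∀ u, a < u → volume (D ∩ Set.Ioc a u) ≤ ENNReal.ofReal (α * (u - a))) :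
    volume (D ∩ (Om ∩ Set.Ioo x b)) ≤ ENNReal.ofReal α * volume (Om ∩ Set.Ioo x b) := by
  set W := Om ∩ Set.Ioo x b with hW
  have hWopen : IsOpen W := hOm.inter isOpen_Ioo
  set K : Set (Set ℝ) := (fun q : ℚ => connectedComponentIn W (q:ℝ)) '' {q : ℚ | (q:ℝ) ∈ W} with hK
  have hKc : K.Countable := (Set.to_countable _).image _
  -- every component in K is a nice interval with left endpoint outside Om
  have hcomp : ∀ S ∈ K, MeasurableSet S ∧ volume (D ∩ S) ≤ ENNReal.ofReal α * volume S := by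
    rintro S ⟨q, hq, rfl⟩
    set S := connectedComponentIn W (q:ℝ) with hSdef
    have hSopen : IsOpen S := hWopen.connectedComponentIn
    have hSsub : S ⊆ W := connectedComponentIn_subset W _
    have hSne : S.Nonempty := ⟨_, mem_connectedComponentIn hq⟩
    obtain ⟨a', b', hab, hSeq⟩ := open_preconn_eq_Ioo S hSopen isPreconnected_connectedComponentIn
      hSne x b (hSsub.trans Set.inter_subset_right)
    have hsubIoo : Set.Ioo a' b' ⊆ Set.Ioo x b := by rw [← hSeq]; exact hSsub.trans Set.inter_subset_right
    have hxa : x ≤ a' := by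
      by_contra hcon
      push_neg at hcon
      have : (a' + min b' x)/2 ∈ Set.Ioo a' b' := by
        constructor
        · have : a' < min b' x := lt_min hab hcon
          linarith
        · have h1 : min b' x ≤ b' := min_le_left _ _
          have : a' < min b' x := lt_min hab hcon
          linarith
      have := (hsubIoo this).1
      have h2 : min b' x ≤ x := min_le_right _ _
      have h3 : a' < min b' x := lt_min hab hcon
      linarith
    have hbb : b' ≤ b := by
      by_contra hcon
      push_neg at hcon
      have : (max a' b + b')/2 ∈ Set.Ioo a' b' := by
        have h1 : a' ≤ max a' b := le_max_left _ _
        have h2 : max a' b < b' := max_lt hab hcon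
        constructor <;> [linarith; linarith]
      have h4 := (hsubIoo this).2
      have h2 : max a' b < b' := max_lt hab hcon
      have h3 : b ≤ max a' b := le_max_right _ _
      linarith
    have ha'Om : a' ∉ Om := by
      intro hcon
      have ha'x : a' ≠ x := fun h => hx (h ▸ hcon)
      have ha'W : a' ∈ W := ⟨hcon, lt_of_le_of_ne hxa (Ne.symm ha'x), lt_of_lt_of_le hab hbb⟩
      -- a' would then be in its own component which meets S
      obtain ⟨δ, hδ, hball⟩ := Metric.isOpen_iff.1 hWopen.connectedComponentIn a'
        (mem_connectedComponentIn ha'W)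
      set z := a' + min δ (b' - a') / 2 with hz
      have h1 : (0:ℝ) < min δ (b' - a') := lt_min hδ (by linarith)
      have h2 : min δ (b' - a') ≤ b' - a' := min_le_right _ _
      have h3 : min δ (b' - a') ≤ δ := min_le_left _ _
      have hz1 : z ∈ connectedComponentIn W a' := by
        apply hball
        simp only [Metric.mem_ball, Real.dist_eq, hz]
        rw [show a' + min δ (b' - a') / 2 - a' = min δ (b' - a') / 2 by ring]
        rw [abs_of_nonneg (by linarith)]
        linarith
      have hz2 : z ∈ S := by
        rw [hSeq]
        refine ⟨?_, ?_⟩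
        · rw [hz]; linarith
        · rw [hz]; linarith
      have e1 : connectedComponentIn W a' = connectedComponentIn W z := connectedComponentIn_eq hz1
      have e2 : S = connectedComponentIn W z := connectedComponentIn_eq hz2
      have : a' ∈ S := by
        rw [e2, ← e1]
        exact mem_connectedComponentIn ha'W
      rw [hSeq] at this
      exact (lt_irrefl a') this.1
    constructor
    · show MeasurableSet (connectedComponentIn W (q:ℝ))
      rw [← hSdef, hSeq]; exact measurableSet_Ioo
    · show volume (D ∩ S) ≤ ENNReal.ofReal α * volume S
      have h1 : volume (D ∩ S) ≤ volume (D ∩ Set.Ioc a' b') := by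
        apply measure_mono
        rw [hSeq]
        exact Set.inter_subset_inter_right _ Set.Ioo_subset_Ioc_self
      calc volume (D ∩ S) ≤ ENNReal.ofReal (α * (b' - a')) :=
            le_trans h1 (hyp a' ha'Om b' hab)
        _ = ENNReal.ofReal α * volume S := by
            rw [hSeq, Real.volume_Ioo, ← ENNReal.ofReal_mul hα]
  -- W is the union of K
  have hWun : W = ⋃ S ∈ K, S := by
    apply Set.Subset.antisymm
    · intro z hz
      have hzC : z ∈ connectedComponentIn W z := mem_connectedComponentIn hz
      obtain ⟨δ, hδ, hball⟩ := Metric.isOpen_iff.1 hWopen.connectedComponentIn z hzC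
      obtain ⟨q, hq1, hq2⟩ := exists_rat_btwn (by linarith : z - δ < z)
      have hqC : (q:ℝ) ∈ connectedComponentIn W z := by
        apply hball
        simp only [Metric.mem_ball, Real.dist_eq]
        rw [abs_of_nonpos (by linarith)]
        linarith
      have hqW : (q:ℝ) ∈ W := connectedComponentIn_subset W z hqC
      refine Set.mem_biUnion (Set.mem_image_of_mem _ hqW) ?_
      rw [← connectedComponentIn_eq hqC]
      exact hzC
    · exact Set.iUnion₂_subset fun S hS => by
        obtain ⟨q, hq, rfl⟩ := hS
        exact connectedComponentIn_subset W _
  have hKd : K.PairwiseDisjoint id := by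
    rintro S1 hS1 S2 hS2 hne
    rw [Function.onFun, Set.disjoint_left]
    intro z hz1 hz2
    obtain ⟨q1, hq1, he1⟩ := hS1
    obtain ⟨q2, hq2, he2⟩ := hS2
    apply hne
    simp only [id] at hz1 hz2
    have e1 : connectedComponentIn W (q1:ℝ) = S1 := he1
    have e2 : connectedComponentIn W (q2:ℝ) = S2 := he2
    rw [← e1] at hz1
    rw [← e2] at hz2
    rw [← e1, ← e2, connectedComponentIn_eq hz1, connectedComponentIn_eq hz2]
  have hKdD : K.PairwiseDisjoint (fun S => D ∩ S) := by
    intro S1 hS1 S2 hS2 hne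
    exact Disjoint.mono Set.inter_subset_right Set.inter_subset_right (hKd hS1 hS2 hne)
  have hmeas : ∀ S ∈ K, MeasurableSet (D ∩ S) := fun S hS => hD.inter (hcomp S hS).1
  calc volume (D ∩ W) = volume (⋃ S ∈ K, D ∩ S) := by rw [hWun, Set.inter_iUnion₂]
    _ = ∑' S : K, volume (D ∩ (S:Set ℝ)) := measure_biUnion hKc hKdD hmeas
    _ ≤ ∑' S : K, ENNReal.ofReal α * volume (S:Set ℝ) :=
        ENNReal.tsum_le_tsum fun S => (hcomp S S.2).2
    _ = ENNReal.ofReal α * ∑' S : K, volume (S:Set ℝ) := ENNReal.tsum_mul_left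
    _ = ENNReal.ofReal α * volume W := by
        rw [hWun]
        congr 1
        exact (measure_biUnion hKc hKd (fun S hS => (hcomp S hS).1)).symm


lemma halo_incl (E : Set ℝ) (hE : MeasurableSet E) (lam α : ℝ)
    (h0 : 0 < lam) (h1 : lam < α) (h2 : α < 1) :
    halo lam E ⊆ halo (lam/α) (halo α E) := by
  have hα0 : 0 < α := lt_trans h0 h1
  intro x hx
  obtain ⟨h, hh, hlt⟩ := exists_of_mem_halo E hE lam x hx
  set E' := E ∩ Set.Ioc x (x+h) with hE'def
  have hE'meas : MeasurableSet E' := hE.inter measurableSet_Ioc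
  set Om := halo α E' with hOmdef
  have hOmOpen : IsOpen Om := halo_isOpen E' hE'meas α
  have hOmsub : Om ⊆ halo α E := halo_mono E' E hE'meas hE Set.inter_subset_left α
  have hFmeas : MeasurableSet (halo α E) := (halo_isOpen E hE α).measurableSet
  by_cases hxOm : x ∈ Om
  · -- x is in the open set: a full interval to the right lies in halo α E
    obtain ⟨ε, hε, hball⟩ := Metric.isOpen_iff.1 hOmOpen x hxOm
    apply mem_halo_of' (halo α E) hFmeas _ x (ε/2) (by linarith)
    have hsub : Set.Ioc x (x + ε/2) ⊆ halo α E := by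
      intro z hz
      apply hOmsub
      apply hball
      simp only [Metric.mem_ball, Real.dist_eq]
      rw [abs_of_nonneg (by linarith [hz.1])]
      linarith [hz.2]
    have heq : halo α E ∩ Set.Ioc x (x + ε/2) = Set.Ioc x (x + ε/2) :=
      Set.inter_eq_self_of_subset_right hsub
    rw [heq, Real.volume_Ioc, show x + ε/2 - x = ε/2 by ring,
      ENNReal.toReal_ofReal (by linarith)]
    have hratio : lam / α < 1 := (div_lt_one hα0).2 h1
    nlinarith
  · -- x outside: use the component bound
    have hyp : ∀ a, a ∉ Om → ∀ u, a < u →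
        volume (E' ∩ Set.Ioc a u) ≤ ENNReal.ofReal (α * (u - a)) := by
      intro a haOm u hau
      by_contra hcon
      push_neg at hcon
      apply haOm
      apply mem_halo_of' E' hE'meas α a (u - a) (by linarith)
      have hfin : volume (E' ∩ Set.Ioc a (a + (u-a))) ≠ ⊤ :=
        ne_of_lt (lt_of_le_of_lt (measure_mono Set.inter_subset_right) measure_Ioc_lt_top)
      have : ENNReal.ofReal (α * (u - a)) < volume (E' ∩ Set.Ioc a (a + (u-a))) := by
        rw [show a + (u - a) = u by ring]
        exact hcon
      exact (ENNReal.ofReal_lt_iff_lt_toReal (by nlinarith) hfin).1 this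
    have hkey := comp_bound Om hOmOpen x (x+h) hxOm E' hE'meas α hα0.le hyp
    set W := Om ∩ Set.Ioo x (x+h) with hWdef
    have hnull : volume (E' \ Om) = 0 := onesided_density E' hE'meas α hα0 h2
    have hcover : E' ⊆ (E' ∩ W) ∪ ((E' \ Om) ∪ {x+h}) := by
      intro z hz
      by_cases hzOm : z ∈ Om
      · rcases eq_or_lt_of_le hz.2.2 with hc | hc
        · exact Or.inr (Or.inr hc)
        · exact Or.inl ⟨hz, hzOm, hz.2.1, hc⟩
      · exact Or.inr (Or.inl ⟨hz, hzOm⟩)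
    have hE'le : volume E' ≤ volume (E' ∩ W) := by
      calc volume E' ≤ volume (E' ∩ W) + volume ((E' \ Om) ∪ {x+h}) :=
            le_trans (measure_mono hcover) (measure_union_le _ _)
        _ ≤ volume (E' ∩ W) + (volume (E' \ Om) + volume ({x+h} : Set ℝ)) := by
            gcongr; exact measure_union_le _ _
        _ = volume (E' ∩ W) := by
            rw [hnull, Real.volume_singleton]; simp
    have hWsub : W ⊆ halo α E ∩ Set.Ioc x (x+h) := fun z hz =>
      ⟨hOmsub hz.1, Set.Ioo_subset_Ioc_self hz.2⟩
    have hfinM : volume (halo α E ∩ Set.Ioc x (x+h)) ≠ ⊤ :=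
      ne_of_lt (lt_of_le_of_lt (measure_mono Set.inter_subset_right) measure_Ioc_lt_top)
    set M := (volume (halo α E ∩ Set.Ioc x (x+h))).toReal with hMdef
    have hchain : volume E' ≤ ENNReal.ofReal α * volume (halo α E ∩ Set.Ioc x (x+h)) :=
      le_trans hE'le (le_trans hkey (mul_le_mul_right (measure_mono hWsub) _))
    have htoReal : (volume E').toReal ≤ α * M := by
      have := ENNReal.toReal_mono (by
        exact ENNReal.mul_ne_top ENNReal.ofReal_ne_top hfinM) hchain
      rwa [ENNReal.toReal_mul, ENNReal.toReal_ofReal hα0.le] at this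
    have hE'big : lam * h < (volume E').toReal := hlt
    apply mem_halo_of' (halo α E) hFmeas (lam/α) x h hh
    rw [← hMdef]
    rw [div_mul_eq_mul_div, div_lt_iff₀ hα0]
    nlinarith

lemma wsize_mono (w : ℝ → ℝ) {A B : Set ℝ} (hAB : A ⊆ B) : wsize w A ≤ wsize w B :=
  lintegral_mono_set hAB

lemma wsize_le_halo (w : ℝ → ℝ) (E : Set ℝ) (hE : MeasurableSet E) (γ : ℝ)
    (h0 : 0 < γ) (h1 : γ < 1) : wsize w E ≤ wsize w (halo γ E) := by
  have hnull : volume (E \ halo γ E) = 0 := onesided_density E hE γ h0 h1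
  calc wsize w E ≤ wsize w ((E ∩ halo γ E) ∪ (E \ halo γ E)) := by
        apply wsize_mono
        intro z hz
        by_cases hc : z ∈ halo γ E
        · exact Or.inl ⟨hz, hc⟩
        · exact Or.inr ⟨hz, hc⟩
    _ ≤ wsize w (E ∩ halo γ E) + wsize w (E \ halo γ E) := lintegral_union_le _ _ _
    _ = wsize w (E ∩ halo γ E) := by
        rw [show wsize w (E \ halo γ E) = 0 from setLIntegral_measure_zero _ _ hnull, add_zero]
    _ ≤ wsize w (halo γ E) := wsize_mono w Set.inter_subset_right

theorem stmt12 (w : ℝ → ℝ) (hw : ∀ x, 0 ≤ w x) (hloc : LocallyIntegrable w volume)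
    (lam α : ℝ) (h0 : 0 < lam) (h1 : lam < α) (h2 : α < 1) :
    tauber w lam ≤ tauber w (lam / α) * tauber w α ∧
    tauber w lam - tauber w (lam / α) ≤ tauber w (lam / α) * (tauber w α - 1) := by
  have hαpos : 0 < α := lt_trans h0 h1
  have hla1 : lam / α < 1 := (div_lt_one hαpos).2 h1
  have hla0 : 0 < lam / α := div_pos h0 hαpos
  have main : tauber w lam ≤ tauber w (lam / α) * tauber w α := by
    rw [show tauber w lam = ⨆ E : {E : Set ℝ // MeasurableSet E ∧ 0 < wsize w E ∧ wsize w E < ⊤},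
      wsize w (halo lam E.1) / wsize w E.1 from rfl]
    apply iSup_le
    rintro ⟨E, hEmeas, hE0, hEfin⟩
    simp only
    set F := halo α E with hF
    have hFmeas : MeasurableSet F := (halo_isOpen E hEmeas α).measurableSet
    have hEF : wsize w E ≤ wsize w F := wsize_le_halo w E hEmeas α hαpos h2
    have hF0 : 0 < wsize w F := lt_of_lt_of_le hE0 hEF
    have hTα : wsize w F / wsize w E ≤ tauber w α :=
      le_iSup (fun E : {E : Set ℝ // MeasurableSet E ∧ 0 < wsize w E ∧ wsize w E < ⊤} =>
        wsize w (halo α E.1) / wsize w E.1) ⟨E, hEmeas, hE0, hEfin⟩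
    by_cases hFfin : wsize w F < ⊤
    · have hT2 : wsize w (halo (lam/α) F) / wsize w F ≤ tauber w (lam/α) :=
        le_iSup (fun E : {E : Set ℝ // MeasurableSet E ∧ 0 < wsize w E ∧ wsize w E < ⊤} =>
          wsize w (halo (lam/α) E.1) / wsize w E.1) ⟨F, hFmeas, hF0, hFfin⟩
      have hc1 : wsize w (halo lam E) ≤ wsize w (halo (lam/α) F) :=
        wsize_mono w (halo_incl E hEmeas lam α h0 h1 h2)
      have hc2 : wsize w (halo (lam/α) F) ≤ tauber w (lam/α) * wsize w F :=
        (ENNReal.div_le_iff hF0.ne' hFfin.ne).1 hT2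
      have hc3 : wsize w F ≤ tauber w α * wsize w E :=
        (ENNReal.div_le_iff hE0.ne' hEfin.ne).1 hTα
      rw [ENNReal.div_le_iff hE0.ne' hEfin.ne]
      calc wsize w (halo lam E) ≤ tauber w (lam/α) * wsize w F := le_trans hc1 hc2
        _ ≤ tauber w (lam/α) * (tauber w α * wsize w E) := mul_le_mul_right hc3 _
        _ = tauber w (lam/α) * tauber w α * wsize w E := by ring
    · have hFtop : wsize w F = ⊤ := by
        push_neg at hFfin
        exact top_le_iff.1 hFfin
      have hTαtop : tauber w α = ⊤ := by
        apply top_le_iff.1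
        refine le_trans ?_ hTα
        rw [hFtop]
        rw [show (⊤:ENNReal) / wsize w E = ⊤ from ENNReal.div_eq_top.2 (Or.inr ⟨rfl, hEfin.ne⟩)]
      have hT21 : (1:ENNReal) ≤ tauber w (lam/α) := by
        have hterm : wsize w (halo (lam/α) E) / wsize w E ≤ tauber w (lam/α) :=
          le_iSup (fun E : {E : Set ℝ // MeasurableSet E ∧ 0 < wsize w E ∧ wsize w E < ⊤} =>
            wsize w (halo (lam/α) E.1) / wsize w E.1) ⟨E, hEmeas, hE0, hEfin⟩
        refine le_trans ?_ hterm
        rw [ENNReal.le_div_iff_mul_le (Or.inl hE0.ne') (Or.inl hEfin.ne), one_mul]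
        exact wsize_le_halo w E hEmeas (lam/α) hla0 hla1
      have : tauber w (lam/α) * tauber w α = ⊤ := by
        rw [hTαtop, ENNReal.mul_top]
        intro hc
        rw [hc] at hT21
        exact absurd hT21 (by simp)
      rw [this]
      exact le_top
  refine ⟨main, ?_⟩
  calc tauber w lam - tauber w (lam/α)
      ≤ tauber w (lam/α) * tauber w α - tauber w (lam/α) := tsub_le_tsub_right main _
    _ ≤ tauber w (lam/α) * (tauber w α - 1) := by
        rw [tsub_le_iff_right]
        calc tauber w (lam/α) * tauber w α
            ≤ tauber w (lam/α) * ((tauber w α - 1) + 1) := mul_le_mul_right le_tsub_add _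
          _ = tauber w (lam/α) * (tauber w α - 1) + tauber w (lam/α) := by
              rw [mul_add, mul_one]
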